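/- Let b and k be vectors in ℝ² such that k does not satisfy k ≤ b componentwise, and b >_lex k lexicographically. Then for any vector k' in ℝ² with k' <_lex k and such that k' and k are mutually non-dominated and unequal, k' does not satisfy k' ≤ b componentwise (i.e., k' cannot dominate or equal b). -/
import Mathlib


def LexLt (a b : Fin 2 → ℝ) : Prop :=
  ∃ i, (∀ j, j < i → a j = b j) ∧ a i < b i

/-- TOA* left-subtree pruning: if k ≰ b componentwise and b >_lex k, then any k'
with k' <_lex k that is mutually non-dominated with (and unequal to) k satisfies
k' ≰ b componentwise. -/
theorem toa_left_subtree_prune (b k k' : Fin 2 → ℝ)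
    (h1 : ¬ (∀ m, k m ≤ b m))
    (h2 : LexLt k b)
    (h3 : LexLt k' k)
    (hne : k' ≠ k)
    (hnd1 : ¬ (∀ m, k' m ≤ k m))
    (hnd2 : ¬ (∀ m, k m ≤ k' m)) :
    ¬ (∀ m, k' m ≤ b m) := by
  obtain ⟨i, hji, hi⟩ := h2
  obtain ⟨i', hji', hi'⟩ := h3
  push_neg at h1 hnd1
  obtain ⟨m1, hm1⟩ := h1
  obtain ⟨m2, hm2⟩ := hnd1
  -- first show k 0 < b 0
  have hkb0 : k 0 < b 0 := by
    fin_cases i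
    · exact hi
    · exfalso
      fin_cases m1
      · exact absurd (le_of_eq (hji 0 (by norm_num))) (not_le.mpr hm1)
      · exact absurd (le_of_lt hi) (not_le.mpr hm1)
  have hb1 : b 1 < k 1 := by
    fin_cases m1
    · exact absurd hkb0 (not_lt.mpr hm1.le)
    · exact hm1
  have hk0 : k' 0 < k 0 := by
    fin_cases i'
    · exact hi'
    · exfalso
      have h0 : k' 0 = k 0 := hji' 0 (by norm_num)
      fin_cases m2
      · exact absurd h0.le (not_le.mpr hm2)
      · exact absurd hi'.le (not_le.mpr hm2)
  have hk1 : k 1 < k' 1 := by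
    fin_cases m2
    · exact absurd hk0 (not_lt.mpr hm2.le)
    · exact hm2
  intro hc
  exact absurd (hc 1) (not_le.mpr (hb1.trans hk1))
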